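/- Let p = 2 and n an odd positive integer. The number of odd solutions x with 1 ≤ x ≤ 2^e to x^(x^n) ≡ x (mod 2^e) is 2^{e-1} if 1 ≤ e ≤ 3, and 2^⌊e/2⌋ + 2 if e ≥ 4. -/

import Mathlib

lemma int_pow2_dvd_iff {u : ℤ} (hu : Odd u) (a b : ℕ) :
    (2:ℤ)^a ∣ 2^b * u ↔ a ≤ b := by
  constructor
  · intro h
    by_contra hab
    push_neg at hab
    have h2 : (2:ℤ)^(b+1) ∣ 2^b * u := dvd_trans (pow_dvd_pow 2 hab) h
    rw [pow_succ] at h2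
    have : (2:ℤ) ∣ u := (mul_dvd_mul_iff_left (a := (2:ℤ)^b) (by positivity)).mp h2
    exact (Int.not_even_iff_odd.mpr hu) (even_iff_two_dvd.mpr this)
  · intro h
    exact Dvd.dvd.mul_right (pow_dvd_pow 2 h) u

lemma nat_pow2_dvd_iff {u : ℕ} (hu : Odd u) (a b : ℕ) :
    2^a ∣ 2^b * u ↔ a ≤ b := by
  constructor
  · intro h
    by_contra hab
    push_neg at hab
    have h2 : 2^(b+1) ∣ 2^b * u := dvd_trans (pow_dvd_pow 2 hab) h
    rw [pow_succ] at h2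
    have : 2 ∣ u := (mul_dvd_mul_iff_left (a := 2^b) (by positivity)).mp h2
    exact (Nat.not_even_iff_odd.mpr hu) (even_iff_two_dvd.mpr this)
  · intro h
    exact Dvd.dvd.mul_right (pow_dvd_pow 2 h) u

lemma odd_geom_sum {x : ℤ} (hx : Odd x) {n : ℕ} (hn : Odd n) :
    Odd (∑ i ∈ Finset.range n, x ^ i) := by
  rw [Int.odd_iff, Finset.sum_int_mod]
  have : ∀ i ∈ Finset.range n, x ^ i % 2 = 1 := by
    intro i _
    exact Int.odd_iff.mp (hx.pow)
  rw [Finset.sum_congr rfl this]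
  have hn' : n % 2 = 1 := Nat.odd_iff.mp hn
  simp only [Finset.sum_const, Finset.card_range, nsmul_eq_mul, mul_one]
  omega

lemma pow_odd_sub_one {x : ℤ} (hx : Odd x) {n : ℕ} (hn : Odd n) :
    ∃ S : ℤ, Odd S ∧ x ^ n - 1 = (x - 1) * S :=
  ⟨_, odd_geom_sum hx hn, by rw [← geom_sum_mul]; ring⟩

lemma pow_two_pow_sub_one {x : ℤ} (hx : Odd x) :
    ∀ k : ℕ, 1 ≤ k →
      ∃ v : ℤ, Odd v ∧ x ^ (2^k) - 1 = (x - 1) * (x + 1) * 2^(k-1) * v := by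
  intro k
  induction k with
  | zero => omega
  | succ k ih =>
    intro _
    rcases Nat.eq_or_lt_of_le (Nat.one_le_iff_ne_zero.mpr (by omega) : 1 ≤ k + 1) with h1 | h1
    · refine ⟨1, odd_one, ?_⟩
      rw [← h1]
      norm_num
      ring
    · have hk : 1 ≤ k := by omega
      obtain ⟨v, hv, hveq⟩ := ih hk
      obtain ⟨j, hj⟩ : Odd (x ^ (2^(k-1))) := hx.pow
      have h2k : (2:ℕ)^k = 2^(k-1) * 2 := by
        rw [← pow_succ]; congr 1; omega
      have hsq : x ^ (2^k) = (x ^ (2^(k-1)))^2 := by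
        rw [h2k, pow_mul]
      have h2k' : (2:ℤ)^k = 2^(k-1) * 2 := by
        rw [← pow_succ]; congr 1; omega
      refine ⟨v * (2*j^2 + 2*j + 1), hv.mul ⟨j^2 + j, by ring⟩, ?_⟩
      have key : x ^ (2^(k+1)) - 1 = (x ^ (2^k) - 1) * (x ^ (2^k) + 1) := by
        rw [show (2:ℕ)^(k+1) = 2^k * 2 by rw [pow_succ], pow_mul]
        ring
      rw [key, hveq, hsq, hj]
      rw [show k + 1 - 1 = k from rfl, h2k']
      ring


lemma cond_iff (n e x : ℕ) (hx : Odd x) :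
    ((x : ZMod (2^e)) ^ (x ^ n) = (x : ZMod (2^e))) ↔
      (2^e : ℤ) ∣ (x:ℤ)^(x^n - 1) - 1 := by
  have hx1 : 1 ≤ x := hx.pos
  have hxn1 : 1 ≤ x ^ n := Nat.one_le_pow n x (by omega)
  have h1 : ((x : ZMod (2^e)) ^ (x ^ n) = (x : ZMod (2^e))) ↔
      (x^(x^n) : ℕ) ≡ x [MOD 2^e] := by
    rw [← ZMod.natCast_eq_natCast_iff]
    push_cast
    rfl
  rw [h1, Nat.modEq_iff_dvd]
  push_cast
  have key : (x:ℤ) - (x:ℤ)^(x^n) = -((x:ℤ) * ((x:ℤ)^(x^n-1) - 1)) := by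
    conv_lhs => rw [show x^n = (x^n - 1) + 1 by omega]
    rw [pow_succ]
    ring
  rw [key, dvd_neg]
  have hxZ : Odd (x:ℤ) := by
    obtain ⟨j, hj⟩ := hx; exact ⟨j, by push_cast [hj]; ring⟩
  have hcop : IsCoprime ((2:ℤ)^e) (x:ℤ) := by
    apply IsCoprime.pow_left
    rw [Int.prime_two.coprime_iff_not_dvd]
    rw [Int.two_dvd_ne_zero]
    exact Int.odd_iff.mp hxZ
  constructor
  · intro h
    exact hcop.dvd_of_dvd_mul_left h
  · intro h
    exact Dvd.dvd.mul_left h _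

lemma decomp {x n : ℕ} (hx : Odd x) (hx3 : 3 ≤ x) (hn : Odd n)
    {a b : ℕ} {s t : ℕ} (hs : Odd s) (ht : Odd t)
    (ha : x - 1 = 2^a * s) (hb : x + 1 = 2^b * t) (ha1 : 1 ≤ a) :
    ∃ u : ℤ, Odd u ∧ (x:ℤ)^(x^n - 1) - 1 = 2^(2*a + b - 1) * u := by
  have hxZ : Odd (x:ℤ) := by
    obtain ⟨j, hj⟩ := hx; exact ⟨j, by push_cast [hj]; ring⟩
  have hn1 : 1 ≤ n := hn.pos
  have hxn3 : 3 ≤ x^n := le_trans hx3 (Nat.le_self_pow (by omega) x)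
  set m := x^n - 1 with hm
  have hm0 : m ≠ 0 := by omega
  obtain ⟨k, w, hw, hmkw⟩ := Nat.exists_eq_two_pow_mul_odd hm0
  obtain ⟨S, hS, hSeq⟩ := pow_odd_sub_one hxZ hn
  have hcast1 : ((x:ℤ) - 1) = ((x - 1 : ℕ) : ℤ) := by push_cast [Nat.cast_sub (by omega : 1 ≤ x)]; ring
  have hcast2 : ((x:ℤ) + 1) = ((x + 1 : ℕ) : ℤ) := by push_cast; ring
  have hmZ : (m : ℤ) = (x:ℤ)^n - 1 := by
    rw [hm]; push_cast [Nat.cast_sub (by omega : 1 ≤ x^n)]; ring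
  have heq1 : (m : ℤ) = 2^a * ((s:ℤ) * S) := by
    rw [hmZ, hSeq, hcast1, ha]; push_cast; ring
  have heq2 : (m : ℤ) = 2^k * (w:ℤ) := by rw [hmkw]; push_cast; ring
  have hsS : Odd ((s:ℤ) * S) := by
    refine Odd.mul ?_ hS
    obtain ⟨j, hj⟩ := hs; exact ⟨j, by push_cast [hj]; ring⟩
  have hwZ : Odd ((w:ℤ)) := by
    obtain ⟨j, hj⟩ := hw; exact ⟨j, by push_cast [hj]; ring⟩
  have hak : a = k := by
    have h1 : a ≤ k := (int_pow2_dvd_iff hwZ a k).mp (heq2 ▸ heq1 ▸ Dvd.dvd.mul_right (dvd_refl _) _)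
    have h2 : k ≤ a := (int_pow2_dvd_iff hsS k a).mp (heq1 ▸ heq2 ▸ Dvd.dvd.mul_right (dvd_refl _) _)
    omega
  subst hak
  -- now m = 2^a * w
  obtain ⟨S₂, hS₂, hS₂eq⟩ := pow_odd_sub_one (hxZ.pow : Odd ((x:ℤ)^(2^a))) hw
  obtain ⟨v, hv, hveq⟩ := pow_two_pow_sub_one hxZ a ha1
  refine ⟨(s:ℤ) * (t:ℤ) * v * S₂, by
    refine Odd.mul (Odd.mul (Odd.mul ?_ ?_) hv) hS₂
    · obtain ⟨j, hj⟩ := hs; exact ⟨j, by push_cast [hj]; ring⟩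
    · obtain ⟨j, hj⟩ := ht; exact ⟨j, by push_cast [hj]; ring⟩, ?_⟩
  have hxm : (x:ℤ)^m = ((x:ℤ)^(2^a))^w := by rw [← pow_mul, ← hmkw]
  rw [hxm, hS₂eq, hveq]
  rw [hcast1, hcast2, ha, hb]
  have hexp : (2:ℤ)^(2*a + b - 1) = 2^a * 2^b * 2^(a-1) := by
    rw [← pow_add, ← pow_add]; congr 1; omega
  rw [hexp]
  push_cast
  ring


lemma char_dvd {n e x : ℕ} (hn : Odd n) (he : 4 ≤ e) (hx : Odd x) :
    ((2^e : ℤ) ∣ (x:ℤ)^(x^n - 1) - 1) ↔ (2^((e+1)/2) ∣ x - 1 ∨ 2^(e-1) ∣ x + 1) := by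
  have hx1 : 1 ≤ x := hx.pos
  have hxmod : x % 2 = 1 := Nat.odd_iff.mp hx
  rcases eq_or_ne x 1 with h1 | h1
  · subst h1; simp
  · have hx3 : 3 ≤ x := by omega
    obtain ⟨a, s, hs, ha⟩ := Nat.exists_eq_two_pow_mul_odd (show x - 1 ≠ 0 by omega)
    obtain ⟨b, t, ht, hb⟩ := Nat.exists_eq_two_pow_mul_odd (show x + 1 ≠ 0 by omega)
    have hsmod : s % 2 = 1 := Nat.odd_iff.mp hs
    have htmod : t % 2 = 1 := Nat.odd_iff.mp ht
    have ha1 : 1 ≤ a := by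
      rcases Nat.eq_zero_or_pos a with h | h
      · subst h; simp at ha; omega
      · exact h
    have hb1 : 1 ≤ b := by
      rcases Nat.eq_zero_or_pos b with h | h
      · subst h; simp at hb; omega
      · exact h
    have hnot : ¬(2 ≤ a ∧ 2 ≤ b) := by
      rintro ⟨h2a, h2b⟩
      have d1 : 2^2 ∣ x - 1 := ha ▸ dvd_mul_of_dvd_left (pow_dvd_pow 2 h2a) s
      have d2 : 2^2 ∣ x + 1 := hb ▸ dvd_mul_of_dvd_left (pow_dvd_pow 2 h2b) t
      norm_num at d1 d2
      omega
    obtain ⟨u, hu, hueq⟩ := decomp hx hx3 hn hs ht ha hb ha1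
    rw [hueq, int_pow2_dvd_iff hu, ha, hb, nat_pow2_dvd_iff hs, nat_pow2_dvd_iff ht]
    omega


theorem stmt_10 (n e : ℕ) (hn : Odd n) (hn1 : 0 < n) (he : 1 ≤ e) :
    (e ≤ 3 →
      ((Finset.Icc 1 (2 ^ e)).filter fun x : ℕ =>
          Odd x ∧ (x : ZMod (2 ^ e)) ^ (x ^ n) = (x : ZMod (2 ^ e))).card = 2 ^ (e - 1)) ∧
    (4 ≤ e →
      ((Finset.Icc 1 (2 ^ e)).filter fun x : ℕ =>
          Odd x ∧ (x : ZMod (2 ^ e)) ^ (x ^ n) = (x : ZMod (2 ^ e))).card =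
        2 ^ (e / 2) + 2) := by
  constructor
  · -- e ≤ 3
    intro he3
    have hfe : ((Finset.Icc 1 (2 ^ e)).filter fun x : ℕ =>
        Odd x ∧ (x : ZMod (2 ^ e)) ^ (x ^ n) = (x : ZMod (2 ^ e))) =
        (Finset.Icc 1 (2 ^ e)).filter (fun x => Odd x) := by
      apply Finset.filter_congr
      intro x hxmem
      rw [and_iff_left_iff_imp]
      intro hodd
      rw [cond_iff n e x hodd]
      -- 2^e ∣ x^(x^n-1) - 1 ; exponent is even
      have hx1 : 1  ≤ x := hodd.pos
      have hxn : Odd (x^n) := hodd.pow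
      have hxnmod : x^n % 2 = 1 := Nat.odd_iff.mp hxn
      have hxn1 : 1 ≤ x^n := by omega
      obtain ⟨r, hr⟩ : ∃ r, x^n - 1 = 2 * r := ⟨(x^n - 1)/2, by omega⟩
      rw [hr]
      have h8 : (8:ℤ) ∣ (x:ℤ)^(2*r) - 1 := by
        have key : (x:ℤ)^(2*r) - 1 = ((x:ℤ)^2 - 1) * (∑ i ∈ Finset.range r, ((x:ℤ)^2) ^ i) := by
          rw [pow_mul, ← geom_sum_mul]; ring
        rw [key]
        apply Dvd.dvd.mul_right
        obtain ⟨j, hj⟩ := hodd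
        have hjZ : (x:ℤ) = 2*j + 1 := by push_cast [hj]; ring
        obtain ⟨c, hc⟩ := Int.even_mul_succ_self (j:ℤ)
        rw [hjZ]
        refine ⟨c, ?_⟩
        nlinarith [hc]
      refine dvd_trans ?_ h8
      have : (2:ℤ)^e ∣ 2^3 := pow_dvd_pow 2 he3
      norm_num at this
      exact this
    rw [hfe]
    interval_cases e <;> decide
  · -- e ≥ 4
    intro he4
    set c := (e+1)/2 with hc
    have hc2 : 2 ≤ c := by omega
    have he13 : 3 ≤ e - 1 := by omega
    have hfe : ((Finset.Icc 1 (2 ^ e)).filter fun x : ℕ =>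
        Odd x ∧ (x : ZMod (2 ^ e)) ^ (x ^ n) = (x : ZMod (2 ^ e))) =
        (Finset.Icc 1 (2 ^ e)).filter (fun x => 2^c ∣ x - 1 ∨ 2^(e-1) ∣ x + 1) := by
      apply Finset.filter_congr
      intro x hxmem
      simp only [Finset.mem_Icc] at hxmem
      constructor
      · rintro ⟨hodd, hcond⟩
        exact (char_dvd hn he4 hodd).mp ((cond_iff n e x hodd).mp hcond)
      · intro hQ
        have hodd : Odd x := by
          rw [Nat.odd_iff]
          rcases hQ with h | h
          · have : 2 ∣ x - 1 := dvd_trans (dvd_pow_self 2 (by omega : c ≠ 0)) h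
            omega
          · have : 2 ∣ x + 1 := dvd_trans (dvd_pow_self 2 (by omega : e - 1 ≠ 0)) h
            omega
        exact ⟨hodd, (cond_iff n e x hodd).mpr ((char_dvd hn he4 hodd).mpr hQ)⟩
    rw [hfe, Finset.filter_or, Finset.card_union_of_disjoint]
    · -- card A + card B
      have hpow : 2^c * 2^(e-c) = 2^e := by rw [← pow_add]; congr 1; omega
      have hA : (Finset.Icc 1 (2^e)).filter (fun x => 2^c ∣ x - 1) =
          Finset.image (fun j => j * 2^c + 1) (Finset.range (2^(e-c))) := by
        ext y
        simp only [Finset.mem_filter, Finset.mem_Icc, Finset.mem_image, Finset.mem_range]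
        constructor
        · rintro ⟨⟨h1y, hy2⟩, j, hj⟩
          have hcomm : 2^c * j = j * 2^c := Nat.mul_comm _ _
          refine ⟨j, ?_, by omega⟩
          have : 2^c * j < 2^c * 2^(e-c) := by omega
          exact Nat.lt_of_mul_lt_mul_left this
        · rintro ⟨j, hjlt, rfl⟩
          have hcomm : 2^c * j = j * 2^c := Nat.mul_comm _ _
          have hle : (j+1) * 2^c ≤ 2^(e-c) * 2^c := Nat.mul_le_mul_right _ (by omega)
          have h2 : 2^(e-c) * 2^c = 2^e := by rw [← pow_add]; congr 1; omega
          have h3 : (j+1) * 2^c = j * 2^c + 2^c := by ring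
          have hc0 : 1 ≤ 2^c := Nat.one_le_two_pow
          refine ⟨⟨by omega, by omega⟩, j, by omega⟩
      have hB : (Finset.Icc 1 (2^e)).filter (fun x => 2^(e-1) ∣ x + 1) =
          {2^(e-1) - 1, 2^e - 1} := by
        have h8 : 8 ≤ 2^(e-1) := by
          calc (8:ℕ) = 2^3 := by norm_num
          _ ≤ 2^(e-1) := Nat.pow_le_pow_right (by norm_num) he13
        have hpe : 2^e = 2^(e-1) * 2 := by rw [← pow_succ]; congr 1; omega
        ext y
        simp only [Finset.mem_filter, Finset.mem_Icc, Finset.mem_insert, Finset.mem_singleton]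
        constructor
        · rintro ⟨⟨h1y, hy2⟩, k, hk⟩
          have hk1 : 1 ≤ k := by
            rcases Nat.eq_zero_or_pos k with h | h
            · subst h; omega
            · exact h
          have hk2 : k ≤ 2 := by
            by_contra hk3
            push_neg at hk3
            have : 2^(e-1) * 3 ≤ 2^(e-1) * k := Nat.mul_le_mul_left _ (by omega)
            omega
          interval_cases k <;> omega
        · rintro (rfl | rfl)
          · exact ⟨⟨by omega, by omega⟩, 1, by omega⟩
          · exact ⟨⟨by omega, by omega⟩, 2, by omega⟩
      rw [hA, hB]
      rw [Finset.card_image_of_injective _ (fun a b hab => by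
        have : a * 2^c = b * 2^c := by omega
        exact Nat.eq_of_mul_eq_mul_right (by positivity) this)]
      rw [Finset.card_range]
      rw [Finset.card_pair (by
        have h8 : 8 ≤ 2^(e-1) := by
          calc (8:ℕ) = 2^3 := by norm_num
          _ ≤ 2^(e-1) := Nat.pow_le_pow_right (by norm_num) he13
        have hpe : 2^e = 2^(e-1) * 2 := by rw [← pow_succ]; congr 1; omega
        omega)]
      have : e - c = e / 2 := by omega
      rw [this]
    · -- disjoint
      rw [Finset.disjoint_left]
      intro x hxA hxB
      simp only [Finset.mem_filter, Finset.mem_Icc] at hxA hxB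
      obtain ⟨⟨h1x, _⟩, hdA⟩ := hxA
      obtain ⟨_, hdB⟩ := hxB
      have d1 : 2^2 ∣ x - 1 := dvd_trans (pow_dvd_pow 2 hc2) hdA
      have d2 : 2^2 ∣ x + 1 := dvd_trans (pow_dvd_pow 2 (by omega : 2 ≤ e - 1)) hdB
      norm_num at d1 d2
      omega
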